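/- Let k, l ≥ 2 be natural numbers, let M = ⟨a, b | aᵏ = bˡ⟩ be the torus knot monoid, and set c = aᵏ (= bˡ) in M. Then for every m ∈ M, the set {λ ∈ ℕ : there exists x ∈ M with m = x * c^λ} is nonempty and has a greatest element; i.e. there is a greatest λ ∈ ℕ with m ∈ M·c^λ. -/

import Mathlib

/-- The congruence on the free monoid on two generators generated by the single
relation `a ^ k = b ^ l`, where `a = of 0` and `b = of 1`. -/
def torusKnotCon (k l : ℕ) : Con (FreeMonoid (Fin 2)) :=
  conGen fun x y =>
    x = FreeMonoid.of (0 : Fin 2) ^ k ∧ y = FreeMonoid.of (1 : Fin 2) ^ l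

/-- The torus knot monoid `⟨a, b | a^k = b^l⟩`. -/
abbrev TorusKnotMonoid (k l : ℕ) := (torusKnotCon k l).Quotient

/-- The generator `a` of the torus knot monoid. -/
def tkA (k l : ℕ) : TorusKnotMonoid k l := (torusKnotCon k l).mk' (FreeMonoid.of 0)

/-- The weight homomorphism on the free monoid: `a ↦ l`, `b ↦ k`. -/
def tkWeightFree (k l : ℕ) : FreeMonoid (Fin 2) →* Multiplicative ℕ :=
  FreeMonoid.lift (fun i => Multiplicative.ofAdd (if i = 0 then l else k))

lemma tkWeightFree_rel (k l : ℕ) :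
    torusKnotCon k l ≤ Con.ker (tkWeightFree k l) := by
  rw [torusKnotCon]
  apply Con.conGen_le.mpr
  rintro x y ⟨hx, hy⟩
  subst hx; subst hy
  show tkWeightFree k l _ = tkWeightFree k l _
  simp only [tkWeightFree, map_pow, FreeMonoid.lift_eval_of]
  norm_num
  rw [← ofAdd_nsmul, ← ofAdd_nsmul, smul_eq_mul, smul_eq_mul, mul_comm]

/-- The weight homomorphism on the torus knot monoid. -/
def tkWeight (k l : ℕ) : TorusKnotMonoid k l →* Multiplicative ℕ :=
  Con.lift _ (tkWeightFree k l) (tkWeightFree_rel k l)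

lemma tkWeight_a (k l : ℕ) : tkWeight k l (tkA k l) = Multiplicative.ofAdd l := by
  simp [tkWeight, tkA, tkWeightFree]

theorem torusKnotMonoid_level_exists (k l : ℕ) (hk : 2 ≤ k) (hl : 2 ≤ l)
    (m : TorusKnotMonoid k l) :
    {lam : ℕ | ∃ x : TorusKnotMonoid k l, m = x * (tkA k l ^ k) ^ lam}.Nonempty ∧
    ∃ lam ∈ {lam : ℕ | ∃ x : TorusKnotMonoid k l, m = x * (tkA k l ^ k) ^ lam},
      ∀ μ ∈ {lam : ℕ | ∃ x : TorusKnotMonoid k l, m = x * (tkA k l ^ k) ^ lam},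
        μ ≤ lam := by
  classical
  set S := {lam : ℕ | ∃ x : TorusKnotMonoid k l, m = x * (tkA k l ^ k) ^ lam} with hS
  have h0 : (0 : ℕ) ∈ S := ⟨m, by simp⟩
  set N := Multiplicative.toAdd (tkWeight k l m) with hN
  have hbound : ∀ μ ∈ S, μ ≤ N := by
    rintro μ ⟨x, hx⟩
    have hw : tkWeight k l m = tkWeight k l x *
        (Multiplicative.ofAdd l) ^ (k * μ) := by
      rw [hx, map_mul, map_pow, map_pow, tkWeight_a, ← pow_mul]
    have : N = Multiplicative.toAdd (tkWeight k l x) + k * μ * l := by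
      rw [hN, hw, toAdd_mul, toAdd_pow, toAdd_ofAdd, smul_eq_mul, mul_comm (k*μ) l,
        mul_comm l (k*μ)]
    have hμ : μ ≤ k * μ * l := by
      calc μ = 1 * μ * 1 := by ring
        _ ≤ k * μ * l := by
          apply Nat.mul_le_mul (Nat.mul_le_mul (by omega) le_rfl) (by omega)
    omega
  refine ⟨⟨0, h0⟩, Nat.findGreatest (· ∈ S) N, ?_, ?_⟩
  · exact Nat.findGreatest_spec (Nat.zero_le N) h0
  · intro μ hμ
    exact Nat.le_findGreatest (hbound μ hμ) hμ
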